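/- Let ρ be a state on ℂ^M ⊗ ℂ^N of rank r, let w_{mn} ∈ ℂ^r and w'_{mn} ∈ ℂ^K (K ≥ r) be two Gram systems for ρ, i.e. ρ_{(i,j),(m,n)} = ⟨w_{ij}, w_{mn}⟩ = ⟨w'_{ij}, w'_{mn}⟩ for all indices. Suppose v_1, …, v_N ∈ ℂ^r and v'_1, …, v'_N ∈ ℂ^K are each linearly independent, and F_m : ℂ^r → ℂ^r, F'_m : ℂ^K → ℂ^K are linear maps with w_{mn} = F_m v_n and w'_{mn} = F'_m v'_n for all m, n. Then there exist K×r complex matrices Ṽ of rank r and V with V†V = I_r such that V† F'_m Ṽ v_n = F_m v_n for all m ∈ {1,…,M} and n ∈ {1,…,N}. -/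

import Mathlib

open Matrix Kronecker BigOperators ComplexConjugate
open scoped ComplexOrder

noncomputable section

/-- The rank-one outer product `u u†`. -/
def outer {ι : Type*} (u : ι → ℂ) : Matrix ι ι ℂ := Matrix.vecMulVec u (star u)

/-- A bipartite state is `K`-separable if it is a sum of exactly `K` Kronecker
products of rank-one positive operators. -/
def IsKSep (M N K : ℕ) (ρ : Matrix (Fin M × Fin N) (Fin M × Fin N) ℂ) : Prop :=
  ∃ (x : Fin K → Fin M → ℂ) (y : Fin K → Fin N → ℂ),
    ρ = ∑ k : Fin K, (outer (x k)) ⊗ₖ (outer (y k))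

/-- A bipartite state is separable if it is `K`-separable for some `K`. -/
def IsSep (M N : ℕ) (ρ : Matrix (Fin M × Fin N) (Fin M × Fin N) ℂ) : Prop :=
  ∃ K : ℕ, IsKSep M N K ρ
lemma constr_injective_aux {ι : Type*} [Fintype ι] {M M' : Type*} [AddCommGroup M]
    [AddCommGroup M'] [Module ℂ M] [Module ℂ M'] (b : Module.Basis ι ℂ M) {f : ι → M'}
    (hf : LinearIndependent ℂ f) : Function.Injective (b.constr ℂ f) := by
  have hx : ∀ z, b.constr ℂ f z = Finsupp.linearCombination ℂ f (b.repr z) := by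
    intro z
    rw [Module.Basis.constr_def]
    simp only [LinearMap.coe_comp, Function.comp_apply, LinearEquiv.coe_coe,
      Finsupp.lmapDomain_apply, Finsupp.linearCombination_mapDomain]
    rfl
  intro x y h
  rw [hx, hx] at h
  exact b.repr.injective (hf h)

set_option synthInstance.maxHeartbeats 1000000 in
lemma exists_injective_extension {N r K : ℕ} (hK : r ≤ K)
    (v : Fin N → Fin r → ℂ) (hv : LinearIndependent ℂ v)
    (v' : Fin N → Fin K → ℂ) (hv' : LinearIndependent ℂ v') :
    ∃ T : (Fin r → ℂ) →ₗ[ℂ] (Fin K → ℂ), Function.Injective T ∧ ∀ n, T (v n) = v' n := by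
  set S : Submodule ℂ (Fin r → ℂ) := Submodule.span ℂ (Set.range v) with hS
  set S' : Submodule ℂ (Fin K → ℂ) := Submodule.span ℂ (Set.range v') with hS'
  obtain ⟨C, hC⟩ := S.exists_isCompl
  obtain ⟨C', hC'⟩ := S'.exists_isCompl
  have hfS : Module.finrank ℂ S = N := by
    rw [hS, finrank_span_eq_card hv, Fintype.card_fin]
  have hfS' : Module.finrank ℂ S' = N := by
    rw [hS', finrank_span_eq_card hv', Fintype.card_fin]
  have hdim : Module.finrank ℂ S + Module.finrank ℂ C = r := by
    rw [Submodule.finrank_add_eq_of_isCompl hC, Module.finrank_fin_fun]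
  have hdim' : Module.finrank ℂ S' + Module.finrank ℂ C' = K := by
    rw [Submodule.finrank_add_eq_of_isCompl hC', Module.finrank_fin_fun]
  have hle : Module.finrank ℂ C ≤ Module.finrank ℂ C' := by omega
  set bS : Module.Basis (Fin N) ℂ S := Module.Basis.span hv
  set bS' : Module.Basis (Fin N) ℂ S' := Module.Basis.span hv'
  set e : S ≃ₗ[ℂ] S' := bS.equiv bS' (Equiv.refl _)
  set bC : Module.Basis (Fin (Module.finrank ℂ C)) ℂ C := Module.finBasis ℂ C
  set bC' : Module.Basis (Fin (Module.finrank ℂ C')) ℂ C' := Module.finBasis ℂ C'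
  have hind : LinearIndependent ℂ (fun i => bC' (Fin.castLE hle i)) :=
    bC'.linearIndependent.comp _ (Fin.castLE_injective hle)
  set g : C →ₗ[ℂ] C' := bC.constr ℂ (fun i => bC' (Fin.castLE hle i))
  have hg : Function.Injective g := constr_injective_aux bC hind
  set πS := S.linearProjOfIsCompl C hC
  set πC := C.linearProjOfIsCompl S hC.symm
  refine ⟨S'.subtype ∘ₗ e.toLinearMap ∘ₗ πS + C'.subtype ∘ₗ g ∘ₗ πC, ?_, ?_⟩
  · intro x y hxy
    have hxy' : (↑(e (πS x)) : Fin K → ℂ) + ↑(g (πC x)) = ↑(e (πS y)) + ↑(g (πC y)) := hxy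
    -- reduce to the zero case
    have key : ∀ z : Fin r → ℂ, (↑(e (πS z)) : Fin K → ℂ) + ↑(g (πC z)) = 0 → z = 0 := by
      intro z hz
      have h1 : (↑(e (πS z)) : Fin K → ℂ) = -↑(g (πC z)) :=
        eq_neg_of_add_eq_zero_left hz
      have h2 : (↑(e (πS z)) : Fin K → ℂ) ∈ S' := (e (πS z)).2
      have h3 : (↑(e (πS z)) : Fin K → ℂ) ∈ C' := by
        rw [h1]; exact neg_mem (g (πC z)).2
      have h4 : (↑(e (πS z)) : Fin K → ℂ) = 0 :=
        Submodule.disjoint_def.mp hC'.disjoint _ h2 h3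
      have h5 : e (πS z) = 0 := Subtype.ext h4
      have h6 : πS z = 0 := e.map_eq_zero_iff.mp h5
      have h7 : (↑(g (πC z)) : Fin K → ℂ) = 0 := by
        have := hz; rw [h4, zero_add] at this; exact this
      have h8 : πC z = 0 := hg ((Subtype.ext h7).trans (map_zero g).symm)
      have : (↑(πS z) : Fin r → ℂ) + ↑(πC z) = z := Submodule.projection_add_projection_eq_self hC z
      rw [h6, h8] at this
      simpa using this.symm
    have : (x - y) = 0 := by
      apply key
      have hπS : πS (x - y) = πS x - πS y := map_sub _ _ _
      have hπC : πC (x - y) = πC x - πC y := map_sub _ _ _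
      rw [hπS, hπC, map_sub, map_sub, Submodule.coe_sub, Submodule.coe_sub]
      calc (↑(e (πS x)) - ↑(e (πS y))) + ((↑(g (πC x)) : Fin K → ℂ) - ↑(g (πC y)))
          = (↑(e (πS x)) + ↑(g (πC x))) - (↑(e (πS y)) + ↑(g (πC y))) := by ring
        _ = 0 := by rw [hxy', sub_self]
    exact sub_eq_zero.mp this
  · intro n
    have hmem : v n ∈ S := Submodule.subset_span (Set.mem_range_self n)
    have h1 : πS (v n) = bS n := by
      have : πS ↑(bS n) = bS n := Submodule.linearProjOfIsCompl_apply_left hC (bS n)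
      show πS (v n) = Module.Basis.span hv n
      rwa [Module.Basis.span_apply] at this ⊢
    have h2 : πC (v n) = 0 :=
      Submodule.linearProjOfIsCompl_apply_right' hC.symm hmem
    show ↑(e (πS (v n))) + ↑(g (πC (v n))) = v' n
    rw [h1, h2, map_zero]
    have h3 : e (bS n) = bS' n := bS.equiv_apply n bS' (Equiv.refl _)
    rw [h3]
    simp [Module.Basis.span_apply hv' n, bS']


/-- Theorem 1: given two Gram systems for the same state ρ of rank r, one in ℂ^r
and one in ℂ^K (K ≥ r), factorised as w_{mn} = F_m v_n and w'_{mn} = F'_m v'_n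
with the v's and v''s linearly independent, there exist a K×r matrix Ṽ of rank r
and a K×r matrix V with V†V = 1 such that V† F'_m Ṽ v_n = F_m v_n for all m, n. -/
theorem gram_systems_related (M N r K : ℕ) (hK : r ≤ K)
    (ρ : Matrix (Fin M × Fin N) (Fin M × Fin N) ℂ) (hρ : ρ.PosSemidef)
    (hrank : ρ.rank = r)
    (w : Fin M → Fin N → Fin r → ℂ) (w' : Fin M → Fin N → Fin K → ℂ)
    (hgram : ∀ (i m : Fin M) (j n : Fin N),
      ρ (i, j) (m, n) = star (w i j) ⬝ᵥ w m n)
    (hgram' : ∀ (i m : Fin M) (j n : Fin N),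
      ρ (i, j) (m, n) = star (w' i j) ⬝ᵥ w' m n)
    (v : Fin N → Fin r → ℂ) (hv : LinearIndependent ℂ v)
    (v' : Fin N → Fin K → ℂ) (hv' : LinearIndependent ℂ v')
    (F : Fin M → Matrix (Fin r) (Fin r) ℂ)
    (F' : Fin M → Matrix (Fin K) (Fin K) ℂ)
    (hF : ∀ m n, w m n = (F m).mulVec (v n))
    (hF' : ∀ m n, w' m n = (F' m).mulVec (v' n)) :
    ∃ (Vt V : Matrix (Fin K) (Fin r) ℂ),
      Vt.rank = r ∧ Vᴴ * V = 1 ∧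
      ∀ (m : Fin M) (n : Fin N),
        (Vᴴ * F' m * Vt).mulVec (v n) = (F m).mulVec (v n) := by
  classical
  -- matrices of columns
  set W : Matrix (Fin r) (Fin M × Fin N) ℂ := Matrix.of fun i p => w p.1 p.2 i with hWdef
  set W' : Matrix (Fin K) (Fin M × Fin N) ℂ := Matrix.of fun i p => w' p.1 p.2 i with hW'def
  have hWW : Wᴴ * W = ρ := by
    ext p q
    rw [hgram p.1 q.1 p.2 q.2]
    simp [Matrix.mul_apply, dotProduct, W]
  have hW'W' : W'ᴴ * W' = ρ := by
    ext p q
    rw [hgram' p.1 q.1 p.2 q.2]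
    simp [Matrix.mul_apply, dotProduct, W']
  have hWW' : W'ᴴ * W' = Wᴴ * W := by rw [hWW, hW'W']
  have hWr : W.rank = r := by rw [← Matrix.rank_conjTranspose_mul_self, hWW, hrank]
  set G : Matrix (Fin r) (Fin r) ℂ := W * Wᴴ with hGdef
  have hGrank : G.rank = r := by rw [hGdef, Matrix.rank_self_mul_conjTranspose, hWr]
  have hGsurj : Function.Surjective G.mulVec := by
    have htop : LinearMap.range G.mulVecLin = ⊤ := by
      apply Submodule.eq_top_of_finrank_eq
      rw [Module.finrank_fin_fun]
      exact hGrank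
    intro y
    obtain ⟨x, hx⟩ := LinearMap.range_eq_top.mp htop y
    exact ⟨x, hx⟩
  have hGunit : IsUnit G := Matrix.mulVec_surjective_iff_isUnit.mp hGsurj
  have hGdet : IsUnit G.det := (Matrix.isUnit_iff_isUnit_det G).mp hGunit
  have hGinv : G * G⁻¹ = 1 := Matrix.mul_nonsing_inv G hGdet
  have hinvG : G⁻¹ * G = 1 := Matrix.nonsing_inv_mul G hGdet
  have hGherm : Gᴴ = G := by
    rw [hGdef, Matrix.conjTranspose_mul, Matrix.conjTranspose_conjTranspose]
  have hGinvherm : G⁻¹ᴴ = G⁻¹ := by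
    rw [Matrix.conjTranspose_nonsing_inv, hGherm]
  set D : Matrix (Fin M × Fin N) (Fin M × Fin N) ℂ := 1 - Wᴴ * G⁻¹ * W with hDdef
  have hWD : W * D = 0 := by
    rw [hDdef, Matrix.mul_sub, Matrix.mul_one]
    have : W * (Wᴴ * G⁻¹ * W) = G * G⁻¹ * W := by
      rw [hGdef]; simp only [Matrix.mul_assoc]
    rw [this, hGinv, Matrix.one_mul, sub_self]
  have hW'D : W' * D = 0 := by
    apply Matrix.conjTranspose_mul_self_eq_zero.mp
    have h1 : (W' * D)ᴴ * (W' * D) = Dᴴ * (W'ᴴ * W') * D := by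
      rw [Matrix.conjTranspose_mul]
      simp only [Matrix.mul_assoc]
    have h2 : Dᴴ * (W'ᴴ * W') * D = (W * D)ᴴ * (W * D) := by
      rw [hWW', Matrix.conjTranspose_mul]
      simp only [Matrix.mul_assoc]
    rw [h1, h2, hWD, Matrix.mul_zero]
  set V : Matrix (Fin K) (Fin r) ℂ := W' * Wᴴ * G⁻¹ with hVdef
  have hVW : V * W = W' := by
    have := hW'D
    rw [hDdef, Matrix.mul_sub, Matrix.mul_one, sub_eq_zero] at this
    calc V * W = W' * (Wᴴ * G⁻¹ * W) := by rw [hVdef]; simp only [Matrix.mul_assoc]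
      _ = W' := this.symm
  have hVV : Vᴴ * V = 1 := by
    have hWX : ∀ X : Matrix (Fin r) (Fin r) ℂ, W * (Wᴴ * X) = G * X := by
      intro X; rw [hGdef, Matrix.mul_assoc]
    have hVh : Vᴴ = G⁻¹ * (W * W'ᴴ) := by
      rw [hVdef, Matrix.conjTranspose_mul, Matrix.conjTranspose_mul, hGinvherm,
        Matrix.conjTranspose_conjTranspose]
    rw [hVh, hVdef]
    calc G⁻¹ * (W * W'ᴴ) * (W' * Wᴴ * G⁻¹)
        = G⁻¹ * (W * (W'ᴴ * W' * (Wᴴ * G⁻¹))) := by simp only [Matrix.mul_assoc]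
      _ = G⁻¹ * (W * (Wᴴ * (W * (Wᴴ * G⁻¹)))) := by rw [hWW']; simp only [Matrix.mul_assoc]
      _ = G⁻¹ * (G * (G * G⁻¹)) := by rw [hWX, hWX]
      _ = 1 := by rw [hGinv, Matrix.mul_one, hinvG]
  have hcolV : ∀ m n, V.mulVec (w m n) = w' m n := by
    intro m n
    funext i
    have := congrFun (congrFun hVW i) (m, n)
    simpa [Matrix.mul_apply, Matrix.mulVec, dotProduct, W, W'] using this
  have hVh : ∀ m n, Vᴴ.mulVec (w' m n) = w m n := by
    intro m n
    rw [← hcolV m n, Matrix.mulVec_mulVec, hVV, Matrix.one_mulVec]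
  obtain ⟨T, hTinj, hTv⟩ := exists_injective_extension hK v hv v' hv'
  set Vt : Matrix (Fin K) (Fin r) ℂ := LinearMap.toMatrix' T with hVtdef
  have hVtmul : ∀ x, Vt.mulVec x = T x := by
    intro x
    rw [← Matrix.toLin'_apply, hVtdef, Matrix.toLin'_toMatrix']
  have hVtrank : Vt.rank = r := by
    have hmvl : Vt.mulVecLin = T := by
      apply LinearMap.ext
      intro x
      rw [Matrix.mulVecLin_apply, hVtmul]
    rw [Matrix.rank, hmvl, LinearMap.finrank_range_of_inj hTinj, Module.finrank_fin_fun]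
  refine ⟨Vt, V, hVtrank, hVV, ?_⟩
  intro m n
  rw [← Matrix.mulVec_mulVec, ← Matrix.mulVec_mulVec, hVtmul, hTv, ← hF' m n, hVh, hF]
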